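/- Let F be a forest on I and V', V'' ⊆ V(F) two sets of inner vertices such that no leaf of F is an ancestor-leaf of both a vertex in V' and a vertex in V''. Then the set γ(F, V' ⊔ V'') is in natural bijection with γ(F, V') × γ(F, V''), where γ(F, V) denotes the set of forests F' ≤ F whose inner vertices are identified (via the order-defining injection) with V. -/
import Mathlib


open Finset

/-- A forest of leaf-labeled rooted binary trees on a ground set of labels,
encoded by the family of "clades": for each inner vertex, the set of its
ancestor leaves. Laminarity plus the binary splitting condition exactly
characterize such forests, and inner vertices correspond bijectively to clades. -/
structure Forest (I : Type*) [DecidableEq I] where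
  ground : Finset I
  clades : Finset (Finset I)
  subset_ground : ∀ C ∈ clades, C ⊆ ground
  laminar : ∀ C ∈ clades, ∀ D ∈ clades, C ⊆ D ∨ D ⊆ C ∨ Disjoint C D
  binary : ∀ C ∈ clades, ∃ A B : Finset I,
      (A ∈ clades ∨ ∃ x, A = {x}) ∧ (B ∈ clades ∨ ∃ x, B = {x}) ∧
      Disjoint A B ∧ A ∪ B = C ∧ A ≠ C ∧ B ≠ C

namespace Forest

variable {I : Type*} [DecidableEq I]

/-- The partial order on forests of the paper: `F' ≤ F` iff there is an injection
of the inner vertices of `F'` into those of `F` which enlarges ancestor-leaf sets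
and preserves the ancestor relation among inner vertices. -/
def Le (F' F : Forest I) : Prop :=
  F'.ground = F.ground ∧ ∃ φ : Finset I → Finset I,
    Set.InjOn φ (F'.clades : Set (Finset I)) ∧
    (∀ C ∈ F'.clades, φ C ∈ F.clades) ∧
    (∀ C ∈ F'.clades, C ⊆ φ C) ∧
    (∀ C ∈ F'.clades, ∀ D ∈ F'.clades, C ⊆ D → φ C ⊆ φ D)

/-- `γ(F,V)`: the set of forests `F' ≤ F` whose inner vertices are identified,
via the order-defining injection, with the subset `V` of inner vertices of `F`. -/
def gamma (F : Forest I) (V : Finset (Finset I)) : Set (Forest I) :=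
  {F' | F'.ground = F.ground ∧ ∃ φ : Finset I → Finset I,
    Set.InjOn φ (F'.clades : Set (Finset I)) ∧
    (∀ C ∈ F'.clades, φ C ∈ F.clades) ∧
    (∀ C ∈ F'.clades, C ⊆ φ C) ∧
    (∀ C ∈ F'.clades, ∀ D ∈ F'.clades, C ⊆ D → φ C ⊆ φ D) ∧
    F'.clades.image φ = V}

/-- A forest consisting of a single tree. -/
def IsTree (F : Forest I) : Prop :=
  F.ground.Nonempty ∧ (F.ground ∈ F.clades ∨ F.ground.card = 1)

/-- The support: leaves whose path to the root contains at least one inner vertex. -/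
def supp (F : Forest I) : Finset I := F.clades.sup id

/-- The leaf-label sets of the trees of the forest: maximal clades together with
the singletons of labels not lying in any clade. -/
def rootBlocks (F : Forest I) : Finset (Finset I) :=
  F.clades.filter (fun C => ∀ D ∈ F.clades, C ⊆ D → C = D) ∪
  (F.ground.filter (fun x => ∀ C ∈ F.clades, x ∉ C)).image
    (fun x => ({x} : Finset I))

end Forest

namespace Forest

variable {I : Type*} [DecidableEq I]

theorem ext' {F G : Forest I} (h1 : F.ground = G.ground)
    (h2 : F.clades = G.clades) : F = G := by
  cases F; cases G; simp_all

theorem clade_nonempty (F : Forest I) {C : Finset I} (hC : C ∈ F.clades) :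
    C.Nonempty := by
  obtain ⟨A, B, _, _, _, hun, hAne, _⟩ := F.binary C hC
  rcases C.eq_empty_or_nonempty with h | h
  · exact absurd (by simpa [h] using (union_eq_empty.1 (h ▸ hun)).1) (h ▸ hAne)
  · exact h

open Classical in
/-- The subforest of clades contained in some member of `V`. -/
noncomputable def restrict (F : Forest I) (V : Finset (Finset I)) : Forest I where
  ground := F.ground
  clades := F.clades.filter (fun C => ∃ D ∈ V, C ⊆ D)
  subset_ground := fun C hC => F.subset_ground C (mem_filter.1 hC).1
  laminar := fun C hC D hD =>
    F.laminar C (mem_filter.1 hC).1 D (mem_filter.1 hD).1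
  binary := by
    intro C hC
    classical
    obtain ⟨hC', D, hD, hCD⟩ := by simpa using mem_filter.1 hC
    obtain ⟨A, B, hA, hB, hAB, hun, hAne, hBne⟩ := F.binary C hC'
    refine ⟨A, B, ?_, ?_, hAB, hun, hAne, hBne⟩
    · rcases hA with hA | hx
      · exact Or.inl (mem_filter.2 ⟨hA, by
          simpa using ⟨D, hD, (subset_union_left.trans hun.le).trans hCD⟩⟩)
      · exact Or.inr hx
    · rcases hB with hB | hx
      · exact Or.inl (mem_filter.2 ⟨hB, by
          simpa using ⟨D, hD, (subset_union_right.trans hun.le).trans hCD⟩⟩)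
      · exact Or.inr hx

@[simp] theorem restrict_ground (F : Forest I) (V : Finset (Finset I)) :
    (F.restrict V).ground = F.ground := rfl

theorem restrict_clades (F : Forest I) (V : Finset (Finset I)) :
    (F.restrict V).clades
      = F.clades.filter (fun C => ∃ D ∈ V, C ⊆ D) := by
  classical
  simp [restrict]

/-- Gluing two forests with disjoint clades. -/
def glue (F₁ F₂ : Forest I) (hg : F₂.ground = F₁.ground)
    (hdis : ∀ C ∈ F₁.clades, ∀ D ∈ F₂.clades, Disjoint C D) : Forest I where
  ground := F₁.ground
  clades := F₁.clades ∪ F₂.clades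
  subset_ground := by
    intro C hC
    rcases mem_union.1 hC with h | h
    · exact F₁.subset_ground C h
    · exact hg ▸ F₂.subset_ground C h
  laminar := by
    intro C hC D hD
    rcases mem_union.1 hC with h1 | h1 <;> rcases mem_union.1 hD with h2 | h2
    · exact F₁.laminar C h1 D h2
    · exact Or.inr (Or.inr (hdis C h1 D h2))
    · exact Or.inr (Or.inr (hdis D h2 C h1).symm)
    · exact F₂.laminar C h1 D h2
  binary := by
    intro C hC
    rcases mem_union.1 hC with h | h
    · obtain ⟨A, B, hA, hB, hAB, hun, hAne, hBne⟩ := F₁.binary C h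
      exact ⟨A, B, hA.imp (fun t => mem_union.2 (Or.inl t)) id,
        hB.imp (fun t => mem_union.2 (Or.inl t)) id, hAB, hun, hAne, hBne⟩
    · obtain ⟨A, B, hA, hB, hAB, hun, hAne, hBne⟩ := F₂.binary C h
      exact ⟨A, B, hA.imp (fun t => mem_union.2 (Or.inr t)) id,
        hB.imp (fun t => mem_union.2 (Or.inr t)) id, hAB, hun, hAne, hBne⟩

@[simp] theorem glue_clades (F₁ F₂ : Forest I) (hg hdis) :
    (glue F₁ F₂ hg hdis).clades = F₁.clades ∪ F₂.clades := rfl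

@[simp] theorem glue_ground (F₁ F₂ : Forest I) (hg hdis) :
    (glue F₁ F₂ hg hdis).ground = F₁.ground := rfl

end Forest

/-- if `V'` and `V''` are sets of inner vertices of `F` having no
common ancestor-leaf (i.e. the corresponding clades are pairwise disjoint), then
`γ(F, V' ⊔ V'')` is in bijection with `γ(F,V') × γ(F,V'')`. -/
theorem stmt_9 (I : Type*) [DecidableEq I] (F : Forest I)
    (V' V'' : Finset (Finset I)) (h' : V' ⊆ F.clades) (h'' : V'' ⊆ F.clades)
    (hdisj : ∀ C ∈ V', ∀ D ∈ V'', Disjoint C D) :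
    Nonempty ((Forest.gamma F (V' ∪ V'')) ≃
      (Forest.gamma F V') × (Forest.gamma F V'')) := by
  classical
  -- basic separation facts
  have sep : ∀ C : Finset I, C.Nonempty →
      (∃ D ∈ V', C ⊆ D) → (∃ D ∈ V'', C ⊆ D) → False := by
    rintro C ⟨x, hx⟩ ⟨D1, hD1, hc1⟩ ⟨D2, hD2, hc2⟩
    exact Finset.disjoint_left.1 (hdisj D1 hD1 D2 hD2) (hc1 hx) (hc2 hx)
  have hVV : ∀ E, E ∈ V' → E ∈ V'' → False := by
    intro E h1 h2
    exact sep E (F.clade_nonempty (h' h1)) ⟨E, h1, Finset.Subset.refl E⟩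
      ⟨E, h2, Finset.Subset.refl E⟩
  -- membership of the restrictions
  have mem : ∀ (W₁ W₂ : Finset (Finset I)),
      (∀ C : Finset I, C.Nonempty → (∃ D ∈ W₁, C ⊆ D) → (∃ D ∈ W₂, C ⊆ D) → False) →
      ∀ F' ∈ Forest.gamma F (W₁ ∪ W₂), F'.restrict W₁ ∈ Forest.gamma F W₁ := by
    intro W₁ W₂ hsep F' hF'
    obtain ⟨hg, φ, hinj, hmem, hsub, hmono, himg⟩ := hF'
    have hsubcl : (F'.restrict W₁).clades ⊆ F'.clades := by
      rw [Forest.restrict_clades]; exact Finset.filter_subset _ _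
    refine ⟨hg, φ, hinj.mono (by exact_mod_cast hsubcl), fun C hC => hmem C (hsubcl hC),
      fun C hC => hsub C (hsubcl hC),
      fun C hC D hD h => hmono C (hsubcl hC) D (hsubcl hD) h, ?_⟩
    rw [Forest.restrict_clades]
    ext E
    simp only [Finset.mem_image, Finset.mem_filter]
    constructor
    · rintro ⟨C, ⟨hC, hP⟩, rfl⟩
      have : φ C ∈ W₁ ∪ W₂ := himg ▸ Finset.mem_image_of_mem φ hC
      rcases Finset.mem_union.1 this with h | h
      · exact h
      · exact absurd (hsep C (F'.clade_nonempty hC) hP ⟨φ C, h, hsub C hC⟩) not_false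
    · intro hE
      have : E ∈ F'.clades.image φ := himg ▸ Finset.mem_union_left _ hE
      obtain ⟨C, hC, rfl⟩ := Finset.mem_image.1 this
      exact ⟨C, ⟨hC, ⟨φ C, hE, hsub C hC⟩⟩, rfl⟩
  have mem1 : ∀ F' ∈ Forest.gamma F (V' ∪ V''), F'.restrict V' ∈ Forest.gamma F V' :=
    mem V' V'' sep
  have mem2 : ∀ F' ∈ Forest.gamma F (V' ∪ V''), F'.restrict V'' ∈ Forest.gamma F V'' := by
    intro F' hF'
    exact mem V'' V' (fun C hC h1 h2 => sep C hC h2 h1) F' (by rwa [Finset.union_comm])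
  -- each clade lies in one of the two parts
  have split : ∀ F' ∈ Forest.gamma F (V' ∪ V''),
      F'.clades = (F'.restrict V').clades ∪ (F'.restrict V'').clades := by
    intro F' hF'
    obtain ⟨hg, φ, hinj, hmem, hsub, hmono, himg⟩ := hF'
    rw [Forest.restrict_clades, Forest.restrict_clades, ← Finset.filter_or]
    refine (Finset.filter_true_of_mem ?_).symm
    intro C hC
    have : φ C ∈ V' ∪ V'' := himg ▸ Finset.mem_image_of_mem φ hC
    rcases Finset.mem_union.1 this with h | h
    · exact Or.inl ⟨φ C, h, hsub C hC⟩
    · exact Or.inr ⟨φ C, h, hsub C hC⟩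
  -- the forward map
  set f : Forest.gamma F (V' ∪ V'') → (Forest.gamma F V') × (Forest.gamma F V'') :=
    fun X => (⟨X.1.restrict V', mem1 X.1 X.2⟩, ⟨X.1.restrict V'', mem2 X.1 X.2⟩) with hf
  refine ⟨Equiv.ofBijective f ⟨?_, ?_⟩⟩
  · -- injective
    intro X Y h
    rw [hf, Prod.mk.injEq, Subtype.ext_iff, Subtype.ext_iff] at h
    have e1 : (X : Forest I).restrict V' = (Y : Forest I).restrict V' := h.1
    have e2 : (X : Forest I).restrict V'' = (Y : Forest I).restrict V'' := h.2
    refine Subtype.ext (Forest.ext' (X.2.1.trans Y.2.1.symm) ?_)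
    rw [split X.1 X.2, split Y.1 Y.2, e1, e2]
  · -- surjective
    rintro ⟨⟨F₁, h₁⟩, ⟨F₂, h₂⟩⟩
    obtain ⟨hg₁, φ₁, hinj₁, hmem₁, hsub₁, hmono₁, himg₁⟩ := h₁
    obtain ⟨hg₂, φ₂, hinj₂, hmem₂, hsub₂, hmono₂, himg₂⟩ := h₂
    have hin₁ : ∀ C ∈ F₁.clades, ∃ D ∈ V', C ⊆ D := fun C hC =>
      ⟨φ₁ C, himg₁ ▸ Finset.mem_image_of_mem φ₁ hC, hsub₁ C hC⟩
    have hin₂ : ∀ C ∈ F₂.clades, ∃ D ∈ V'', C ⊆ D := fun C hC =>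
      ⟨φ₂ C, himg₂ ▸ Finset.mem_image_of_mem φ₂ hC, hsub₂ C hC⟩
    have hdis12 : ∀ C ∈ F₁.clades, ∀ D ∈ F₂.clades, Disjoint C D := by
      intro C hC D hD
      obtain ⟨E1, hE1, hc1⟩ := hin₁ C hC
      obtain ⟨E2, hE2, hc2⟩ := hin₂ D hD
      rw [Finset.disjoint_left]
      intro x hxC hxD
      exact Finset.disjoint_left.1 (hdisj E1 hE1 E2 hE2) (hc1 hxC) (hc2 hxD)
    have hnot12 : ∀ C ∈ F₂.clades, C ∉ F₁.clades := fun C hC2 hC1 =>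
      sep C (F₂.clade_nonempty hC2) (hin₁ C hC1) (hin₂ C hC2)
    have hg21 : F₂.ground = F₁.ground := hg₂.trans hg₁.symm
    set G := F₁.glue F₂ hg21 hdis12 with hG
    set φ : Finset I → Finset I := fun C => if C ∈ F₁.clades then φ₁ C else φ₂ C with hφ
    have hφ1 : ∀ C ∈ F₁.clades, φ C = φ₁ C := fun C h => if_pos h
    have hφ2 : ∀ C ∈ F₂.clades, φ C = φ₂ C := fun C h => if_neg (hnot12 C h)
    have hφV1 : ∀ C ∈ F₁.clades, φ₁ C ∈ V' := fun C hC =>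
      himg₁ ▸ Finset.mem_image_of_mem φ₁ hC
    have hφV2 : ∀ C ∈ F₂.clades, φ₂ C ∈ V'' := fun C hC =>
      himg₂ ▸ Finset.mem_image_of_mem φ₂ hC
    have hGmem : G ∈ Forest.gamma F (V' ∪ V'') := by
      refine ⟨hg₁, φ, ?_, ?_, ?_, ?_, ?_⟩
      · intro C hC D hD heq
        simp only [hG, Forest.glue_clades, Finset.coe_union, Set.mem_union,
          Finset.mem_coe] at hC hD
        rcases hC with hC | hC <;> rcases hD with hD | hD
        · exact hinj₁ hC hD (by rwa [hφ1 C hC, hφ1 D hD] at heq)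
        · rw [hφ1 C hC, hφ2 D hD] at heq
          exact absurd (hVV (φ₁ C) (hφV1 C hC) (heq ▸ hφV2 D hD)) not_false
        · rw [hφ2 C hC, hφ1 D hD] at heq
          exact absurd (hVV (φ₁ D) (hφV1 D hD) (heq ▸ hφV2 C hC)) not_false
        · exact hinj₂ hC hD (by rwa [hφ2 C hC, hφ2 D hD] at heq)
      · intro C hC
        rcases Finset.mem_union.1 (by simpa [hG] using hC) with h | h
        · rw [hφ1 C h]; exact hmem₁ C h
        · rw [hφ2 C h]; exact hmem₂ C h
      · intro C hC
        rcases Finset.mem_union.1 (by simpa [hG] using hC) with h | h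
        · rw [hφ1 C h]; exact hsub₁ C h
        · rw [hφ2 C h]; exact hsub₂ C h
      · intro C hC D hD hCD
        rcases Finset.mem_union.1 (by simpa [hG] using hC) with h1 | h1 <;>
          rcases Finset.mem_union.1 (by simpa [hG] using hD) with h2 | h2
        · rw [hφ1 C h1, hφ1 D h2]; exact hmono₁ C h1 D h2 hCD
        · obtain ⟨E2, hE2, hc2⟩ := hin₂ D h2
          exact absurd (sep C (F₁.clade_nonempty h1) (hin₁ C h1)
            ⟨E2, hE2, hCD.trans hc2⟩) not_false
        · obtain ⟨E1, hE1, hc1⟩ := hin₁ D h2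
          exact absurd (sep C (F₂.clade_nonempty h1)
            ⟨E1, hE1, hCD.trans hc1⟩ (hin₂ C h1)) not_false
        · rw [hφ2 C h1, hφ2 D h2]; exact hmono₂ C h1 D h2 hCD
      · rw [hG, Forest.glue_clades, Finset.image_union]
        rw [Finset.image_congr (fun C hC => hφ1 C hC),
          Finset.image_congr (fun C hC => hφ2 C hC), himg₁, himg₂]
    refine ⟨⟨G, hGmem⟩, ?_⟩
    rw [hf]
    refine Prod.ext (Subtype.ext (Forest.ext' rfl ?_)) (Subtype.ext (Forest.ext' ?_ ?_))
    · ext C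
      simp only [Forest.restrict_clades, Finset.mem_filter, hG, Forest.glue_clades,
        Finset.mem_union]
      constructor
      · rintro ⟨h | h, hP⟩
        · exact h
        · exact absurd (sep C (F₂.clade_nonempty h) hP (hin₂ C h)) not_false
      · intro h
        exact ⟨Or.inl h, hin₁ C h⟩
    · simp [hG, hg21]
    · ext C
      simp only [Forest.restrict_clades, Finset.mem_filter, hG, Forest.glue_clades,
        Finset.mem_union]
      constructor
      · rintro ⟨h | h, hP⟩
        · exact absurd (sep C (F₁.clade_nonempty h) (hin₁ C h) hP) not_false
        · exact h
      · intro h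
        exact ⟨Or.inr h, hin₂ C h⟩
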